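/- For N = 3 with coupling constants J₁, J₂, J₃, the 3×3 matrix Ĵ with diagonal entries (-J₂-J₃, -J₁-J₃, -J₁-J₂) and off-diagonal entries Ĵ₁₂ = J₃, Ĵ₁₃ = J₂, Ĵ₂₃ = J₁ is positive semidefinite if and only if J₁ + J₂ + J₃ ≤ -√(J₁² + J₂² + J₃²). -/

import Mathlib

theorem quad_psd (α γ B x y : ℝ) (hα : 0 ≤ α) (hγ : 0 ≤ γ) (hp : B^2 ≤ α*γ) :
    0 ≤ α*x^2 + 2*B*x*y + γ*y^2 := by
  rcases eq_or_lt_of_le hα with h|h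
  · have hB : B = 0 := by nlinarith [sq_nonneg B]
    subst hB
    rw [← h]
    nlinarith [mul_nonneg hγ (sq_nonneg y)]
  · nlinarith [sq_nonneg (α*x+B*y), mul_nonneg (sub_nonneg.2 hp) (sq_nonneg y)]

theorem minor_psd (α γ B : ℝ) (hα : 0 ≤ α) (hγ : 0 ≤ γ)
    (h1 : 0 ≤ γ*(α*γ - B^2)) (h2 : 0 ≤ α*(α*γ - B^2))
    (h3 : 0 ≤ α + 2*B + γ) (h4 : 0 ≤ α - 2*B + γ) : B^2 ≤ α*γ := by
  by_contra hc
  push_neg at hc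
  have hα0 : α = 0 := by nlinarith
  have hγ0 : γ = 0 := by nlinarith
  have hB : B = 0 := by rw [hα0, hγ0] at h3 h4; linarith
  rw [hα0, hγ0, hB] at hc; norm_num at hc

theorem stmt_12 (J₁ J₂ J₃ : ℝ) :
    (Matrix.PosSemidef
      !![-J₂ - J₃, J₃, J₂;
         J₃, -J₁ - J₃, J₁;
         J₂, J₁, -J₁ - J₂]) ↔
    J₁ + J₂ + J₃ ≤ -Real.sqrt (J₁ ^ 2 + J₂ ^ 2 + J₃ ^ 2) := by
  rw [Matrix.posSemidef_iff_dotProduct_mulVec]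
  constructor
  · rintro ⟨-, hq⟩
    have key : ∀ a b c : ℝ, 0 ≤ -J₁*(b-c)^2 - J₂*(a-c)^2 - J₃*(a-b)^2 := by
      intro a b c
      have := hq ![a,b,c]
      simp [dotProduct, Matrix.mulVec, Fin.sum_univ_three] at this
      nlinarith [this]
    have hα : 0 ≤ -(J₂+J₃) := by nlinarith [key 1 0 0]
    have hγ : 0 ≤ -(J₁+J₃) := by nlinarith [key 0 1 0]
    have hδ : 0 ≤ -(J₁+J₂) := by nlinarith [key 0 0 1]
    have hp : J₃^2 ≤ (-(J₂+J₃))*(-(J₁+J₃)) :=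
      minor_psd _ _ _ hα hγ
        (by nlinarith [key (-(J₁+J₃)) (-J₃) 0])
        (by nlinarith [key (-J₃) (-(J₂+J₃)) 0])
        (by nlinarith [key 1 1 0])
        (by nlinarith [key 1 (-1) 0])
    have hsq : J₁^2+J₂^2+J₃^2 ≤ (-(J₁+J₂+J₃))^2 := by nlinarith
    have h5 := Real.sqrt_le_sqrt hsq
    rw [Real.sqrt_sq (by linarith)] at h5
    linarith
  · intro h
    have hq0 : (0:ℝ) ≤ J₁^2+J₂^2+J₃^2 := by positivity
    have hsqnn := Real.sqrt_nonneg (J₁^2+J₂^2+J₃^2)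
    have habs1 : |J₁| ≤ Real.sqrt (J₁^2+J₂^2+J₃^2) := by
      rw [← Real.sqrt_sq_eq_abs]; exact Real.sqrt_le_sqrt (by nlinarith [sq_nonneg J₂, sq_nonneg J₃])
    have habs2 : |J₂| ≤ Real.sqrt (J₁^2+J₂^2+J₃^2) := by
      rw [← Real.sqrt_sq_eq_abs]; exact Real.sqrt_le_sqrt (by nlinarith [sq_nonneg J₁, sq_nonneg J₃])
    have habs3 : |J₃| ≤ Real.sqrt (J₁^2+J₂^2+J₃^2) := by
      rw [← Real.sqrt_sq_eq_abs]; exact Real.sqrt_le_sqrt (by nlinarith [sq_nonneg J₁, sq_nonneg J₂])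
    have hα : 0 ≤ -(J₂+J₃) := by linarith [neg_abs_le J₁]
    have hγ : 0 ≤ -(J₁+J₃) := by linarith [neg_abs_le J₂]
    have hδ : 0 ≤ -(J₁+J₂) := by linarith [neg_abs_le J₃]
    have hsq : J₁^2+J₂^2+J₃^2 ≤ (J₁+J₂+J₃)^2 := by
      nlinarith [Real.sq_sqrt hq0]
    have hp : J₃^2 ≤ (-(J₂+J₃))*(-(J₁+J₃)) := by nlinarith
    constructor
    · unfold Matrix.IsHermitian
      ext i j
      fin_cases i <;> fin_cases j <;> simp
    · intro x
      have hkey := quad_psd (-(J₂+J₃)) (-(J₁+J₃)) J₃ (x 0 - x 2) (x 1 - x 2) hα hγ hp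
      simp [dotProduct, Matrix.mulVec, Fin.sum_univ_three]
      nlinarith [hkey]
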